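/- Let E be a finite-dimensional complex normed vector space and T : E → E a continuous linear map with sup_{n ≥ 1} ‖T^n‖ < ∞. Then the Cesàro averages (1/N) Σ_{n=1}^{N} T^n converge as N → ∞ to a linear map P satisfying P² = P, T ∘ P = P ∘ T = P, the range of P is the fixed space ker(T − id), and the kernel of P is the range of (T − id). -/

import Mathlib

open scoped BigOperators

/-- Mean ergodic theorem for power-bounded operators on a finite-dimensional complex normed
space: if `sup_{n ≥ 1} ‖T^n‖ < ∞`, the Cesàro averages `(1/N) Σ_{n=1}^N T^n` converge in
operator norm to a projection `P` with `P² = P`, `TP = PT = P`, whose range is the fixed space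
`ker (T - id)` and whose kernel is the range of `T - id`. -/
theorem mean_ergodic_theorem_finite_dimensional
    {E : Type*} [NormedAddCommGroup E] [NormedSpace ℂ E] [FiniteDimensional ℂ E]
    (T : E →L[ℂ] E) (C : ℝ) (hC : ∀ n : ℕ, 1 ≤ n → ‖T ^ n‖ ≤ C) :
    ∃ P : E →L[ℂ] E,
      Filter.Tendsto (fun N : ℕ => (N : ℂ)⁻¹ • ∑ n ∈ Finset.Icc 1 N, T ^ n)
        Filter.atTop (nhds P) ∧
      P * P = P ∧ T * P = P ∧ P * T = P ∧
      LinearMap.range (P : E →ₗ[ℂ] E) = LinearMap.ker ((T - 1 : E →L[ℂ] E) : E →ₗ[ℂ] E) ∧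
      LinearMap.ker (P : E →ₗ[ℂ] E) = LinearMap.range ((T - 1 : E →L[ℂ] E) : E →ₗ[ℂ] E) := by
  classical
  have hT1 : ‖T‖ ≤ C := by simpa using hC 1 le_rfl
  have hC0 : 0 ≤ C := le_trans (norm_nonneg T) hT1
  set K : Submodule ℂ E := LinearMap.ker ((T - 1 : E →L[ℂ] E) : E →ₗ[ℂ] E) with hKdef
  set R : Submodule ℂ E := LinearMap.range ((T - 1 : E →L[ℂ] E) : E →ₗ[ℂ] E) with hRdef
  -- fixed points satisfy T^n x = x
  have hfix : ∀ x ∈ K, ∀ n : ℕ, (T ^ n) x = x := by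
    intro x hx n
    have hTx : T x = x := by
      have : (T - 1) x = 0 := hx
      simpa [ContinuousLinearMap.sub_apply, sub_eq_zero] using this
    induction n with
    | zero => simp
    | succ n ih => rw [pow_succ, ContinuousLinearMap.mul_apply, hTx, ih]
  -- telescoping sum identity
  have htel : ∀ N : ℕ, (∑ n ∈ Finset.Icc 1 N, T ^ n) * (T - 1) = T ^ (N + 1) - T := by
    intro N
    induction N with
    | zero => simp
    | succ N ih =>
        rw [Finset.sum_Icc_succ_top (by omega : 1 ≤ N + 1), add_mul, ih, mul_sub, mul_one,
          ← pow_succ]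
        abel
  -- disjointness of K and R
  have hdisj : Disjoint K R := by
    rw [Submodule.disjoint_def]
    intro x hxK hxR
    obtain ⟨y, hy⟩ := hxR
    have key : ∀ N : ℕ, (N : ℝ) * ‖x‖ ≤ 2 * C * ‖y‖ := by
      intro N
      have h1 : (∑ n ∈ Finset.Icc 1 N, T ^ n) x = (N : ℕ) • x := by
        rw [ContinuousLinearMap.sum_apply]
        rw [Finset.sum_congr rfl fun n hn => hfix x hxK n]
        simp [Nat.card_Icc]
      have h2 : (∑ n ∈ Finset.Icc 1 N, T ^ n) x = (T ^ (N + 1) - T) y := by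
        have := congrArg (fun f : E →L[ℂ] E => f y) (htel N)
        rw [← hy]
        exact this
      have h3 : ‖(T ^ (N + 1) - T) y‖ ≤ 2 * C * ‖y‖ := by
        calc ‖(T ^ (N + 1) - T) y‖ ≤ ‖T ^ (N + 1) - T‖ * ‖y‖ :=
              ContinuousLinearMap.le_opNorm _ _
          _ ≤ (C + C) * ‖y‖ := by
              gcongr
              exact le_trans (norm_sub_le _ _) (add_le_add (hC (N + 1) (by omega)) hT1)
          _ = 2 * C * ‖y‖ := by ring
      have h4 : ‖(N : ℕ) • x‖ = (N : ℝ) * ‖x‖ := by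
        rw [← Nat.cast_smul_eq_nsmul ℝ, norm_smul]
        simp
      rw [← h4, ← h1, h2]
      exact h3
    by_contra hx0
    have hxpos : 0 < ‖x‖ := norm_pos_iff.mpr hx0
    obtain ⟨N, hN⟩ := exists_nat_gt ((2 * C * ‖y‖) / ‖x‖)
    have := key N
    have : (N : ℝ) ≤ (2 * C * ‖y‖) / ‖x‖ := (le_div_iff₀ hxpos).mpr this
    linarith
  -- K and R are complementary
  have hcompl : IsCompl K R := by
    constructor
    · exact hdisj
    · rw [codisjoint_iff]
      apply Submodule.eq_top_of_finrank_eq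
      have h1 := LinearMap.finrank_range_add_finrank_ker ((T - 1 : E →L[ℂ] E) : E →ₗ[ℂ] E)
      have h2 := Submodule.finrank_sup_add_finrank_inf_eq K R
      rw [hdisj.eq_bot] at h2
      simp only [finrank_bot, add_zero] at h2
      have hRR : LinearMap.range ((T - 1 : E →L[ℂ] E) : E →ₗ[ℂ] E) = R := by
        rw [hRdef]
      have hKK : LinearMap.ker ((T - 1 : E →L[ℂ] E) : E →ₗ[ℂ] E) = K := by
        rw [hKdef]
      rw [hRR, hKK] at h1
      omega
  -- the projection P
  set Pl : E →ₗ[ℂ] E := K.subtype ∘ₗ K.linearProjOfIsCompl R hcompl with hPl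
  set P : E →L[ℂ] E := LinearMap.toContinuousLinearMap Pl with hP
  have hPapply : ∀ x, P x = Pl x := fun x => rfl
  have hPK : ∀ x, P x ∈ K := fun x => (K.linearProjOfIsCompl R hcompl x).2
  have hPleft : ∀ x ∈ K, P x = x := by
    intro x hx
    have := Submodule.linearProjOfIsCompl_apply_left hcompl ⟨x, hx⟩
    exact congrArg Subtype.val this
  have hPright : ∀ x ∈ R, P x = 0 := by
    intro x hx
    have := Submodule.linearProjOfIsCompl_apply_right' hcompl hx
    simp [hPapply, hPl, this]
    exact this
  have hPP : P * P = P := by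
    ext x
    exact hPleft (P x) (hPK x)
  have hTP : T * P = P := by
    ext x
    have : (T - 1) (P x) = 0 := hPK x
    have := sub_eq_zero.mp (by simpa [ContinuousLinearMap.sub_apply] using this)
    simpa [ContinuousLinearMap.mul_apply] using this
  have hPT : P * T = P := by
    ext x
    have hmem : T x - x ∈ R := ⟨x, by simp [ContinuousLinearMap.sub_apply]⟩
    have h0 : P (T x - x) = 0 := hPright _ hmem
    have : P (T x) - P x = 0 := by rw [← map_sub]; exact h0
    simpa [ContinuousLinearMap.mul_apply] using sub_eq_zero.mp this
  have hrangeP : LinearMap.range (P : E →ₗ[ℂ] E) = K := by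
    apply le_antisymm
    · rintro _ ⟨x, rfl⟩; exact hPK x
    · intro x hx; exact ⟨x, hPleft x hx⟩
  have hkerP : LinearMap.ker (P : E →ₗ[ℂ] E) = R := by
    apply le_antisymm
    · intro x hx
      have hx0 : P x = 0 := hx
      have hmem : x - P x ∈ R := by
        have := fun y : E => Submodule.linearProjOfIsCompl_apply_right' hcompl (x := y)
        -- x = P x + (x - P x); show x - P x ∈ R
        have hx' : x - Pl x ∈ R := by
          have hxd : x = Pl x + (x - Pl x) := by abel
          -- use that linearProjOfIsCompl kills R-part: standard decomposition
          have := Submodule.codisjoint_iff_exists_add_eq.mp hcompl.codisjoint x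
          obtain ⟨k, r, hk, hr, hkr⟩ := this
          have : Pl x = k := by
            have : Pl x = Pl k + Pl r := by rw [← map_add, hkr]
            rw [this]
            have hk' : Pl k = k := hPleft k hk
            have hr' : Pl r = 0 := hPright r hr
            rw [hk', hr', add_zero]
          rw [this, ← hkr]
          simpa using hr
        simpa [hPapply] using hx'
      rw [hx0, sub_zero] at hmem
      exact hmem
    · intro x hx
      exact hPright x hx
  -- right inverse S of (T - 1) composed with (1 - P)
  have hmemR : ∀ x : E, x - Pl x ∈ R := by
    intro x
    have hm : x - P x ∈ LinearMap.ker (P : E →ₗ[ℂ] E) := by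
      simp only [LinearMap.mem_ker, map_sub]
      have hpp : P (P x) = P x := by
        have := congrArg (fun f : E →L[ℂ] E => f x) hPP
        simpa [ContinuousLinearMap.mul_apply] using this
      change P x - P (P x) = 0
      rw [hpp, sub_self]
    rw [hkerP] at hm
    simpa [hPapply] using hm
  obtain ⟨g, hg⟩ := (((T - 1 : E →L[ℂ] E) : E →ₗ[ℂ] E).rangeRestrict).exists_rightInverse_of_surjective
    (LinearMap.range_eq_top.2 (LinearMap.surjective_rangeRestrict _))
  set Sl : E →ₗ[ℂ] E :=
    g ∘ₗ ((LinearMap.id - Pl).codRestrict R (fun x => by simpa using hmemR x)) with hSl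
  set S : E →L[ℂ] E := LinearMap.toContinuousLinearMap Sl with hS
  have hval : ∀ v : LinearMap.range ((T - 1 : E →L[ℂ] E) : E →ₗ[ℂ] E),
      (T - 1) (g v) = (v : E) := by
    intro v
    have h := congrArg (fun f => f v) hg
    simp only [LinearMap.comp_apply, LinearMap.id_apply] at h
    have h2 := congrArg Subtype.val h
    exact h2
  have hTS : (T - 1) * S = 1 - P := by
    ext x
    show (T - 1) (S x) = (1 - P) x
    have hSx : S x = g ⟨x - Pl x, hmemR x⟩ := rfl
    rw [hSx, hval ⟨x - Pl x, hmemR x⟩]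
    simp [ContinuousLinearMap.sub_apply, hPapply]
  -- sum of T^n * P
  have hTnP : ∀ n : ℕ, 1 ≤ n → T ^ n * P = P := by
    intro n hn
    induction n with
    | zero => omega
    | succ n ih =>
        rcases Nat.eq_or_lt_of_le hn with h | h
        · have hn0 : n = 0 := by omega
          subst hn0
          simpa using hTP
        · rw [pow_succ, mul_assoc, hTP, ih (by omega)]
  -- main identity for N ≥ 1
  have hmain : ∀ N : ℕ, 1 ≤ N →
      (N : ℂ)⁻¹ • ∑ n ∈ Finset.Icc 1 N, T ^ n - P = (N : ℂ)⁻¹ • ((T ^ (N + 1) - T) * S) := by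
    intro N hN
    have hNne : (N : ℂ) ≠ 0 := by exact_mod_cast Nat.cast_ne_zero.mpr (by omega)
    have hsum : (∑ n ∈ Finset.Icc 1 N, T ^ n) = (N : ℂ) • P + (T ^ (N + 1) - T) * S := by
      have h1 : (∑ n ∈ Finset.Icc 1 N, T ^ n) * P = (N : ℂ) • P := by
        rw [Finset.sum_mul, Finset.sum_congr rfl fun n hn => hTnP n (Finset.mem_Icc.mp hn).1]
        simp [Nat.card_Icc, ← Nat.cast_smul_eq_nsmul ℂ]
      have h2 : (∑ n ∈ Finset.Icc 1 N, T ^ n) * (1 - P) = (T ^ (N + 1) - T) * S := by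
        calc (∑ n ∈ Finset.Icc 1 N, T ^ n) * (1 - P)
            = (∑ n ∈ Finset.Icc 1 N, T ^ n) * ((T - 1) * S) := by rw [hTS]
          _ = ((∑ n ∈ Finset.Icc 1 N, T ^ n) * (T - 1)) * S := by rw [mul_assoc]
          _ = (T ^ (N + 1) - T) * S := by rw [htel]
      have := h2
      rw [mul_sub, mul_one] at this
      have : (∑ n ∈ Finset.Icc 1 N, T ^ n) =
          (∑ n ∈ Finset.Icc 1 N, T ^ n) * P + (T ^ (N + 1) - T) * S := by
        rw [← this]; abel
      rw [this, h1]
    rw [hsum, smul_add, smul_smul, inv_mul_cancel₀ hNne, one_smul]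
    abel
  refine ⟨P, ?_, hPP, hTP, hPT, by rw [hrangeP], by rw [hkerP]⟩
  rw [← tendsto_sub_nhds_zero_iff]
  apply squeeze_zero_norm' (a := fun N : ℕ => (N : ℝ)⁻¹ * (2 * C * ‖S‖))
  · filter_upwards [Filter.eventually_ge_atTop 1] with N hN
    rw [hmain N hN, norm_smul ((N : ℂ)⁻¹) ((T ^ (N + 1) - T) * S)]
    simp only [norm_inv, Complex.norm_natCast]
    gcongr
    calc ‖(T ^ (N + 1) - T) * S‖ ≤ ‖T ^ (N + 1) - T‖ * ‖S‖ := ContinuousLinearMap.opNorm_comp_le _ _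
      _ ≤ (C + C) * ‖S‖ := by
          gcongr
          exact le_trans (norm_sub_le _ _) (add_le_add (hC (N + 1) (by omega)) hT1)
      _ = 2 * C * ‖S‖ := by ring
  · simpa using tendsto_inv_atTop_nhds_zero_nat.mul_const (2 * C * ‖S‖)
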